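/- Let q be an odd prime power, d divisible by 4, and E ⊂ F_q^d. If |E| > (q^{d-1}/d) · C(d, d/2) · C(d/2, d/4), then for every even r with 0 < r < d there exist x, y ∈ E with Hamming distance |x - y| = r. -/
import Mathlib


open Finset

private lemma aux_pow_succ_le (t : ℕ) : ∀ r : ℕ, (t + 1) ^ r ≤ t ^ r + r * (t + 1) ^ (r - 1)
  | 0 => by simp
  | (r + 1) => by
    have ih := aux_pow_succ_le t r
    have hx : r * ((t + 1) ^ (r - 1) * (t + 1)) ≤ r * (t + 1) ^ r := by
      cases r with
      | zero => simp
      | succ n => simp [pow_succ]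
    calc (t + 1) ^ (r + 1) = (t + 1) ^ r * (t + 1) := pow_succ _ _
      _ ≤ (t ^ r + r * (t + 1) ^ (r - 1)) * (t + 1) := Nat.mul_le_mul_right _ ih
      _ = t ^ r * t + t ^ r + r * ((t + 1) ^ (r - 1) * (t + 1)) := by ring
      _ ≤ t ^ (r + 1) + (t + 1) ^ r + r * (t + 1) ^ r := by
          have h1 : t ^ r * t = t ^ (r + 1) := (pow_succ _ _).symm
          have h2 : t ^ r ≤ (t + 1) ^ r := Nat.pow_le_pow_left (by omega) r
          omega
      _ = t ^ (r + 1) + (r + 1) * (t + 1) ^ (r + 1 - 1) := by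
          rw [Nat.add_sub_cancel]; ring

theorem hamming_distances_main (p l q d : ℕ) [Fact p.Prime] (hp : Odd p)
    (hq : q = p ^ l) (hl : 0 < l) (hd : 4 ∣ d)
    (F : Type*) [Field F] [Fintype F] [DecidableEq F] (hF : Fintype.card F = q)
    (E : Finset (Fin d → F))
    (hE : ((q : ℝ) ^ (d - 1) / d) * (d.choose (d / 2) : ℝ) * ((d / 2).choose (d / 4) : ℝ)
            < E.card) :
    ∀ r : ℕ, Even r → 0 < r → r < d →
      ∃ x ∈ E, ∃ y ∈ E, hammingDist x y = r := by
  intro r hre hr0 hrd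
  by_contra hcon
  push_neg at hcon
  -- hcon : ∀ x ∈ E, ∀ y ∈ E, hammingDist x y ≠ r
  have hr2 : 2 ≤ r := by
    obtain ⟨k, rfl⟩ := hre; omega
  have hd4 : 4 ≤ d := by omega
  have hq0 : 0 < q := by
    have := (Fact.out : p.Prime).pos
    subst hq; positivity
  set s := d - r with hs
  have hsr : s + r = d := Nat.sub_add_cancel hrd.le
  have hsd : s < d := by omega
  -- projections onto the first s and last r coordinates
  set ρ : (Fin d → F) → (Fin s → F) :=
    fun x j => x ⟨(j : ℕ), by have := j.isLt; omega⟩ with hρdef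
  set σ : (Fin d → F) → (Fin r → F) :=
    fun x j => x ⟨s + (j : ℕ), by have := j.isLt; omega⟩ with hσdef
  have hagree : ∀ x y : Fin d → F, ρ x = ρ y → ∀ i : Fin d, (i : ℕ) < s → x i = y i := by
    intro x y h i hi
    have h2 := congrFun h ⟨(i : ℕ), hi⟩
    simpa [hρdef, Fin.eta] using h2
  have hsig : ∀ x : Fin d → F, ∀ i : Fin d, ∀ hi : s ≤ (i : ℕ),
      x i = σ x ⟨(i : ℕ) - s, by have := i.isLt; omega⟩ := by
    intro x i hi
    simp only [hσdef]
    exact congrArg x (Fin.ext (by have := i.isLt; simp; omega)).symm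
  have hdist : ∀ x y : Fin d → F, ρ x = ρ y → (∀ j : Fin r, σ x j ≠ σ y j) →
      hammingDist x y = r := by
    intro x y hρ hσne
    have hset : (filter (fun i => x i ≠ y i) univ)
        = filter (fun i : Fin d => ¬ (i : ℕ) < s) univ := by
      ext i
      simp only [mem_filter, mem_univ, true_and]
      constructor
      · intro hne
        intro hlt
        exact hne (hagree x y hρ i hlt)
      · intro hge
        rw [hsig x i (not_lt.1 hge), hsig y i (not_lt.1 hge)]
        exact hσne _
    show (filter (fun i => x i ≠ y i) univ).card = r
    rw [hset]
    have h1 : (filter (fun i : Fin d => (i : ℕ) < s) univ) = Finset.Iio (⟨s, hsd⟩ : Fin d) := by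
      ext i; simp [Fin.lt_def]
    rw [filter_not, card_sdiff_of_subset (filter_subset _ _), h1, Fin.card_Iio, card_univ,
      Fintype.card_fin]
    simp only [Fin.val_mk]
    omega
  -- fiber bound
  have hfiber : ∀ v ∈ E.image ρ, (E.filter fun z => ρ z = v).card ≤ q ^ r - (q - 1) ^ r := by
    intro v hv
    obtain ⟨x, hxE, hxv⟩ := mem_image.1 hv
    set B := {z ∈ E | ρ z = v} with hB
    have hinjB : Set.InjOn σ B := by
      intro z hz z' hz' hσeq
      funext i
      by_cases hi : (i : ℕ) < s
      · exact hagree z z' (by rw [(mem_filter.1 hz).2, (mem_filter.1 hz').2]) i hi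
      · rw [hsig z i (not_lt.1 hi), hsig z' i (not_lt.1 hi), hσeq]
    have hsub : B.image σ ⊆ filter (fun g : Fin r → F => ∃ j, g j = σ x j) univ := by
      intro g hg
      obtain ⟨y, hyB, rfl⟩ := mem_image.1 hg
      refine mem_filter.2 ⟨mem_univ _, ?_⟩
      by_contra hno
      push_neg at hno
      exact hcon y (mem_filter.1 hyB).1 x hxE
        (hdist y x (by rw [(mem_filter.1 hyB).2, hxv]) hno)
    have hcnt : #(filter (fun g : Fin r → F => ∃ j, g j = σ x j) univ)
        = q ^ r - (q - 1) ^ r := by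
      have hcompl : (filter (fun g : Fin r → F => ∀ j, g j ≠ σ x j) univ)
          = Fintype.piFinset (fun j => ({σ x j}ᶜ : Finset F)) := by
        ext g; simp [Fintype.mem_piFinset]
      have h2 : #(filter (fun g : Fin r → F => ∀ j, g j ≠ σ x j) univ) = (q - 1) ^ r := by
        rw [hcompl, Fintype.card_piFinset]
        simp [card_compl, hF]
      have h3 : (filter (fun g : Fin r → F => ∃ j, g j = σ x j) univ)
          = univ \ (filter (fun g : Fin r → F => ∀ j, g j ≠ σ x j) univ) := by
        rw [← filter_not]
        apply filter_congr
        intro g _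
        push_neg
        rfl
      rw [h3, card_sdiff_of_subset (filter_subset _ _), h2, card_univ, Fintype.card_fun, hF,
        Fintype.card_fin]
    calc B.card = (B.image σ).card := (card_image_of_injOn hinjB).symm
      _ ≤ _ := card_le_card hsub
      _ = q ^ r - (q - 1) ^ r := hcnt
  -- count E by fibers
  have hEle : E.card ≤ q ^ s * (q ^ r - (q - 1) ^ r) := by
    calc E.card = ∑ v ∈ E.image ρ, (E.filter fun z => ρ z = v).card := card_eq_sum_card_image ρ E
      _ ≤ (E.image ρ).card • (q ^ r - (q - 1) ^ r) := sum_le_card_nsmul _ _ _ hfiber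
      _ = (E.image ρ).card * (q ^ r - (q - 1) ^ r) := by rw [smul_eq_mul]
      _ ≤ q ^ s * (q ^ r - (q - 1) ^ r) := by
          apply Nat.mul_le_mul_right
          calc (E.image ρ).card ≤ Fintype.card (Fin s → F) := card_le_univ _
            _ = q ^ s := by rw [Fintype.card_fun, hF, Fintype.card_fin]
  have hpow : q ^ r - (q - 1) ^ r ≤ r * q ^ (r - 1) := by
    have h := aux_pow_succ_le (q - 1) r
    have hq1 : q - 1 + 1 = q := by omega
    rw [hq1] at h
    omega
  have hE2 : E.card ≤ (d - 1) * q ^ (d - 1) := by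
    calc E.card ≤ q ^ s * (q ^ r - (q - 1) ^ r) := hEle
      _ ≤ q ^ s * (r * q ^ (r - 1)) := Nat.mul_le_mul_left _ hpow
      _ = r * q ^ (d - 1) := by
          rw [mul_left_comm, ← pow_add]
          congr 2
          omega
      _ ≤ (d - 1) * q ^ (d - 1) := Nat.mul_le_mul_right _ (by omega)
  -- binomial coefficient bound : d * (d-1) ≤ C(d, d/2) * C(d/2, d/4)
  have hcc : d * (d - 1) ≤ d.choose (d / 2) * (d / 2).choose (d / 4) := by
    have h1 : d.choose 2 ≤ d.choose (d / 2) := Nat.choose_le_middle 2 d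
    have h2 : 2 ≤ (d / 2).choose (d / 4) := by
      have h3 : (d / 2).choose 1 ≤ (d / 2).choose ((d / 2) / 2) := Nat.choose_le_middle 1 (d / 2)
      rw [Nat.choose_one_right] at h3
      have h4 : (d / 2) / 2 = d / 4 := by omega
      rw [h4] at h3
      omega
    have h5 : d.choose 2 * 2 = d * (d - 1) := by
      rw [Nat.choose_two_right]
      exact Nat.div_mul_cancel (((by norm_num : (2:ℕ) ∣ 4).trans hd).mul_right _)
    calc d * (d - 1) = d.choose 2 * 2 := h5.symm
      _ ≤ d.choose (d / 2) * (d / 2).choose (d / 4) := Nat.mul_le_mul h1 h2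
  -- put it together over ℝ
  have hA : (0 : ℝ) ≤ (q : ℝ) ^ (d - 1) := by positivity
  have hdpos : (0 : ℝ) < (d : ℝ) := by positivity
  have hE2R : (E.card : ℝ) ≤ ((d - 1 : ℕ) : ℝ) * (q : ℝ) ^ (d - 1) := by
    calc (E.card : ℝ) ≤ (((d - 1) * q ^ (d - 1) : ℕ) : ℝ) := Nat.cast_le.2 hE2
      _ = ((d - 1 : ℕ) : ℝ) * (q : ℝ) ^ (d - 1) := by push_cast; ring
  have hccR : ((d : ℝ) * ((d - 1 : ℕ) : ℝ)) ≤
      (d.choose (d / 2) : ℝ) * ((d / 2).choose (d / 4) : ℝ) := by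
    calc (d : ℝ) * ((d - 1 : ℕ) : ℝ) = ((d * (d - 1) : ℕ) : ℝ) := by push_cast; ring
      _ ≤ _ := by
        rw [← Nat.cast_mul]
        exact_mod_cast hcc
  have hkey : ((d - 1 : ℕ) : ℝ) * (q : ℝ) ^ (d - 1) ≤
      ((q : ℝ) ^ (d - 1) / d) * (d.choose (d / 2) : ℝ) * ((d / 2).choose (d / 4) : ℝ) := by
    rw [div_mul_eq_mul_div, div_mul_eq_mul_div, le_div_iff₀ hdpos]
    nlinarith [mul_le_mul_of_nonneg_left hccR hA]
  linarith [hE2R, hkey, hE]
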